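/- A digraph D is strongly connected if and only if there exists a pair, unique up to isomorphism, consisting of a bipartite matching covered graph G and a perfect matching M of G such that D is isomorphic to the M-direction D(G, M). -/

import Mathlib

open scoped Classical

/-- A finite digraph (without loops or multiple arcs) on a subset of `ℕ`. -/
structure Dgraph where
  verts : Finset ℕ
  arcs : Finset (ℕ × ℕ)
  arcs_mem : ∀ a ∈ arcs, a.1 ∈ verts ∧ a.2 ∈ verts
  no_loops : ∀ a ∈ arcs, a.1 ≠ a.2

/-- The cut of a digraph at a set `X`: all arcs with exactly one endpoint in `X`. -/
noncomputable def Dgraph.cutArcs (D : Dgraph) (X : Set ℕ) : Finset (ℕ × ℕ) :=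
  D.arcs.filter fun a => (a.1 ∈ X ∧ a.2 ∉ X) ∨ (a.1 ∉ X ∧ a.2 ∈ X)

/-- `F` is the union of the arc sets of a family of pairwise vertex-disjoint directed
cycles of `D`: every vertex has at most one outgoing arc in `F` and equally many
outgoing and incoming arcs in `F`. -/
def Dgraph.IsCycleFamily (D : Dgraph) (F : Finset (ℕ × ℕ)) : Prop :=
  F ⊆ D.arcs ∧ ∀ v : ℕ,
    (F.filter fun a => a.1 = v).card ≤ 1 ∧
    (F.filter fun a => a.1 = v).card = (F.filter fun a => a.2 = v).card

/-- The cycle porosity of the cut at `X`: the maximum number of edges of the cut lying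
on a family of pairwise vertex-disjoint directed cycles. -/
noncomputable def Dgraph.cycPorosity (D : Dgraph) (X : Set ℕ) : ℕ :=
  (D.arcs.powerset.filter fun F => D.IsCycleFamily F).sup fun F => (D.cutArcs X ∩ F).card

/-- A leaf of a tree (a vertex with at most one neighbour). -/
def IsTreeLeaf {W : Type} (T : SimpleGraph W) (t : W) : Prop :=
  (T.neighborSet t).ncard ≤ 1

/-- A cubic tree: a tree all of whose inner (non-leaf) vertices have degree exactly 3. -/
def IsCubicTree {W : Type} (T : SimpleGraph W) : Prop :=
  T.IsTree ∧ ∀ t : W, ¬ IsTreeLeaf T t → (T.neighborSet t).ncard = 3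

/-- The shore induced by the tree edge `t₁t₂`: the images of all leaves lying on the
`t₁`-side of the tree after deleting the edge `t₁t₂`. -/
def treeShore {W : Type} (T : SimpleGraph W) (φ : W → ℕ) (t₁ t₂ : W) : Set ℕ :=
  φ '' {l | IsTreeLeaf T l ∧ (T.deleteEdges {s(t₁, t₂)}).Reachable t₁ l}

/-- A cycle decomposition of a digraph `D`: a cubic tree together with a bijection `φ`
between its leaves and the vertices of `D`. -/
structure CycleDecomp (D : Dgraph) where
  W : Type
  fin : Fintype W
  T : SimpleGraph W
  cubic : IsCubicTree T
  φ : W → ℕ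
  bij : Set.BijOn φ {l | IsTreeLeaf T l} ↑D.verts

/-- The width of a cycle decomposition: the maximum cycle porosity over the cuts induced
by the edges of the tree. -/
noncomputable def CycleDecomp.width {D : Dgraph} (c : CycleDecomp D) : ℕ :=
  letI := c.fin
  Finset.univ.sup fun p : c.W × c.W =>
    if c.T.Adj p.1 p.2 then D.cycPorosity (treeShore c.T c.φ p.1 p.2) else 0

/-- The cyclewidth of a digraph: the least width of a cycle decomposition. -/
noncomputable def cycleWidth (D : Dgraph) : ℕ :=
  sInf {k | ∃ c : CycleDecomp D, c.width = k}

/-- A finite simple (undirected, loopless) graph on a subset of `ℕ`. -/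
structure UGraph where
  verts : Finset ℕ
  edges : Finset (Sym2 ℕ)
  no_loops : ∀ e ∈ edges, ¬ e.IsDiag
  mem_verts : ∀ e ∈ edges, ∀ v ∈ e, v ∈ verts

def UGraph.Adj (G : UGraph) (a b : ℕ) : Prop := s(a, b) ∈ G.edges

/-- A matching of `G`: a set of edges no two of which share an endpoint. -/
def UGraph.IsMatching (G : UGraph) (M : Finset (Sym2 ℕ)) : Prop :=
  M ⊆ G.edges ∧ ∀ e ∈ M, ∀ f ∈ M, e ≠ f → ∀ v, v ∈ e → v ∉ f

/-- A perfect matching of `G`: a matching covering every vertex. -/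
def UGraph.IsPerfectMatching (G : UGraph) (M : Finset (Sym2 ℕ)) : Prop :=
  G.IsMatching M ∧ ∀ v ∈ G.verts, ∃ e ∈ M, v ∈ e

def UGraph.Connected (G : UGraph) : Prop :=
  G.verts.Nonempty ∧ ∀ u ∈ G.verts, ∀ v ∈ G.verts, Relation.ReflTransGen G.Adj u v

/-- A graph is matching covered if it is connected and every edge lies in some perfect
matching. -/
def UGraph.MatchingCovered (G : UGraph) : Prop :=
  G.Connected ∧ ∀ e ∈ G.edges, ∃ M, G.IsPerfectMatching M ∧ e ∈ M

/-- The subgraph induced on the vertex set `S`. -/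
noncomputable def UGraph.induce (G : UGraph) (S : Set ℕ) : UGraph where
  verts := G.verts.filter fun v => v ∈ S
  edges := G.edges.filter fun e => ∀ v ∈ e, v ∈ S
  no_loops := fun e he => G.no_loops e (Finset.mem_filter.mp he).1
  mem_verts := by
    intro e he v hv
    rw [Finset.mem_filter] at he ⊢
    exact ⟨G.mem_verts e he.1 v hv, he.2 v hv⟩

/-- `A` induces a bipartition of `G`: every edge has exactly one endpoint in `A`. -/
def UGraph.IsBipartition (G : UGraph) (A : Set ℕ) : Prop :=
  ∀ e ∈ G.edges, ∃ a b, e = s(a, b) ∧ a ∈ A ∧ b ∉ A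

/-- The cut of `G` at `X`: all edges with exactly one endpoint in `X`. -/
noncomputable def UGraph.edgeCut (G : UGraph) (X : Set ℕ) : Finset (Sym2 ℕ) :=
  G.edges.filter fun e => ∃ a b, e = s(a, b) ∧ a ∈ X ∧ b ∉ X

/-- The matching porosity of the cut at `X`: the maximum number of edges of a perfect
matching crossing the cut. -/
noncomputable def UGraph.matchPorosity (G : UGraph) (X : Set ℕ) : ℕ :=
  (G.edges.powerset.filter fun M => G.IsPerfectMatching M).sup fun M =>
    (G.edgeCut X ∩ M).card

/-- A perfect matching decomposition of `G`: a cubic tree together with a bijection `δ`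
between its leaves and the vertices of `G`. -/
structure PMDecomp (G : UGraph) where
  W : Type
  fin : Fintype W
  T : SimpleGraph W
  cubic : IsCubicTree T
  δ : W → ℕ
  bij : Set.BijOn δ {l | IsTreeLeaf T l} ↑G.verts

/-- The width of a perfect matching decomposition: the maximum matching porosity over
the cuts induced by the edges of the tree. -/
noncomputable def PMDecomp.width {G : UGraph} (d : PMDecomp G) : ℕ :=
  letI := d.fin
  Finset.univ.sup fun p : d.W × d.W =>
    if d.T.Adj p.1 p.2 then G.matchPorosity (treeShore d.T d.δ p.1 p.2) else 0

/-- The perfect matching width of `G`. -/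
noncomputable def pmWidth (G : UGraph) : ℕ :=
  sInf {k | ∃ d : PMDecomp G, d.width = k}

/-- `S` is an `M`-conformal set: `M` restricted to `S` is a perfect matching of `G[S]`
and `M` restricted to the complement of `S` is a perfect matching of `G − S`. -/
def UGraph.MConformalSet (G : UGraph) (M : Finset (Sym2 ℕ)) (S : Set ℕ) : Prop :=
  (G.induce S).IsPerfectMatching (M.filter fun e => ∀ v ∈ e, v ∈ S) ∧
  (G.induce Sᶜ).IsPerfectMatching (M.filter fun e => ∀ v ∈ e, v ∉ S)

/-- A perfect matching decomposition all of whose inner edges induce cuts with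
`M`-conformal shores. -/
def PMDecomp.MConformal {G : UGraph} (d : PMDecomp G) (M : Finset (Sym2 ℕ)) : Prop :=
  ∀ t₁ t₂ : d.W, d.T.Adj t₁ t₂ → ¬ IsTreeLeaf d.T t₁ → ¬ IsTreeLeaf d.T t₂ →
    G.MConformalSet M (treeShore d.T d.δ t₁ t₂) ∧
    G.MConformalSet M (treeShore d.T d.δ t₂ t₁)

/-- The `M`-perfect matching width of `G`. -/
noncomputable def mpmWidth (G : UGraph) (M : Finset (Sym2 ℕ)) : ℕ :=
  sInf {k | ∃ d : PMDecomp G, d.MConformal M ∧ d.width = k}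

/-- The `M`-direction of a bipartite graph `G` with bipartition class `A` and perfect
matching `M`: matching edges are contracted (each resulting vertex being named by the
`A`-endpoint of its matching edge) and all other edges are oriented from `A` to the
other class. -/
noncomputable def mDirection (G : UGraph) (A : Set ℕ) (M : Finset (Sym2 ℕ)) : Dgraph where
  verts := G.verts.filter fun v => v ∈ A
  arcs := ((G.verts.filter fun v => v ∈ A) ×ˢ (G.verts.filter fun v => v ∈ A)).filter
    fun p => p.1 ≠ p.2 ∧ ∃ b, b ∉ A ∧ s(p.2, b) ∈ M ∧ s(p.1, b) ∈ G.edges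
  arcs_mem := by
    intro a ha
    rw [Finset.mem_filter, Finset.mem_product] at ha
    exact ha.1
  no_loops := fun a ha => ((Finset.mem_filter.mp ha).2).1

/-- A digraph is strongly connected if it is nonempty and every vertex can reach every
other vertex by a directed path. -/
def Dgraph.StronglyConnected (D : Dgraph) : Prop :=
  D.verts.Nonempty ∧ ∀ u ∈ D.verts, ∀ v ∈ D.verts,
    Relation.ReflTransGen (fun a b => (a, b) ∈ D.arcs) u v

/-- Isomorphism of digraphs. -/
def DgraphIso (D D' : Dgraph) : Prop :=
  ∃ f : ℕ → ℕ, Set.BijOn f ↑D.verts ↑D'.verts ∧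
    ∀ u ∈ D.verts, ∀ v ∈ D.verts, ((u, v) ∈ D.arcs ↔ (f u, f v) ∈ D'.arcs)

/-- Isomorphism of graphs. -/
def UGraphIso (G G' : UGraph) : Prop :=
  ∃ f : ℕ → ℕ, Set.BijOn f ↑G.verts ↑G'.verts ∧
    ∀ u ∈ G.verts, ∀ v ∈ G.verts, (s(u, v) ∈ G.edges ↔ s(f u, f v) ∈ G'.edges)

/-- Isomorphism of pairs consisting of a graph and a perfect matching. -/
def MatchedUGraphIso (G : UGraph) (M : Finset (Sym2 ℕ)) (G' : UGraph)
    (M' : Finset (Sym2 ℕ)) : Prop :=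
  ∃ f : ℕ → ℕ, Set.BijOn f ↑G.verts ↑G'.verts ∧
    (∀ u ∈ G.verts, ∀ v ∈ G.verts, (s(u, v) ∈ G.edges ↔ s(f u, f v) ∈ G'.edges)) ∧
    ∀ u ∈ G.verts, ∀ v ∈ G.verts, (s(u, v) ∈ M ↔ s(f u, f v) ∈ M')

-- ### partner
noncomputable def auxPartner (M : Finset (Sym2 ℕ)) (v : ℕ) : ℕ :=
  if h : ∃ z, s(v, z) ∈ M then h.choose else v

lemma auxPartner_eq {G : UGraph} {M : Finset (Sym2 ℕ)} (hM : G.IsMatching M)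
    {v z : ℕ} (h : s(v, z) ∈ M) : auxPartner M v = z := by
  have hex : ∃ z, s(v, z) ∈ M := ⟨z, h⟩
  rw [auxPartner, dif_pos hex]
  have hz' := hex.choose_spec
  by_contra hne
  by_cases heq : s(v, hex.choose) = s(v, z)
  · rw [Sym2.eq_iff] at heq
    rcases heq with ⟨-, h2⟩ | ⟨h1, h2⟩
    · exact hne h2
    · exact hne (h2.trans h1)
  · exact hM.2 _ hz' _ h heq v (Sym2.mem_mk_left _ _) (Sym2.mem_mk_left _ _)

lemma auxPartner_mem_M {G : UGraph} {M : Finset (Sym2 ℕ)} (hM : G.IsPerfectMatching M)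
    {v : ℕ} (hv : v ∈ G.verts) : s(v, auxPartner M v) ∈ M := by
  obtain ⟨e, heM, hve⟩ := hM.2 v hv
  obtain ⟨z, rfl⟩ := Sym2.mem_iff_exists.mp hve
  rw [auxPartner_eq hM.1 heM]; exact heM

lemma auxPartner_mem_edges {G : UGraph} {M : Finset (Sym2 ℕ)} (hM : G.IsPerfectMatching M)
    {v : ℕ} (hv : v ∈ G.verts) : s(v, auxPartner M v) ∈ G.edges :=
  hM.1.1 (auxPartner_mem_M hM hv)

lemma auxPartner_mem_verts {G : UGraph} {M : Finset (Sym2 ℕ)} (hM : G.IsPerfectMatching M)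
    {v : ℕ} (hv : v ∈ G.verts) : auxPartner M v ∈ G.verts :=
  G.mem_verts _ (auxPartner_mem_edges hM hv) _ (Sym2.mem_mk_right _ _)

lemma auxPartner_partner {G : UGraph} {M : Finset (Sym2 ℕ)} (hM : G.IsPerfectMatching M)
    {v : ℕ} (hv : v ∈ G.verts) : auxPartner M (auxPartner M v) = v := by
  have h := auxPartner_mem_M hM hv
  rw [Sym2.eq_swap] at h
  exact auxPartner_eq hM.1 h

-- bipartition side
lemma aux_bip_side {G : UGraph} {A : Set ℕ} (hA : G.IsBipartition A)
    {v w : ℕ} (he : s(v, w) ∈ G.edges) (hv : v ∈ A) : w ∉ A := by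
  obtain ⟨a, b, heq, haA, hbA⟩ := hA _ he
  rw [Sym2.eq_iff] at heq
  rcases heq with ⟨rfl, rfl⟩ | ⟨rfl, rfl⟩
  · exact hbA
  · exact absurd hv hbA

lemma aux_bip_side' {G : UGraph} {A : Set ℕ} (hA : G.IsBipartition A)
    {v w : ℕ} (he : s(v, w) ∈ G.edges) (hv : v ∉ A) : w ∈ A := by
  obtain ⟨a, b, heq, haA, hbA⟩ := hA _ he
  rw [Sym2.eq_iff] at heq
  rcases heq with ⟨rfl, rfl⟩ | ⟨rfl, rfl⟩
  · exact absurd haA hv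
  · exact haA

lemma auxPartner_notin_A {G : UGraph} {A : Set ℕ} {M : Finset (Sym2 ℕ)}
    (hA : G.IsBipartition A) (hM : G.IsPerfectMatching M)
    {v : ℕ} (hv : v ∈ G.verts) (hvA : v ∈ A) : auxPartner M v ∉ A :=
  aux_bip_side hA (auxPartner_mem_edges hM hv) hvA

lemma auxPartner_in_A {G : UGraph} {A : Set ℕ} {M : Finset (Sym2 ℕ)}
    (hA : G.IsBipartition A) (hM : G.IsPerfectMatching M)
    {v : ℕ} (hv : v ∈ G.verts) (hvA : v ∉ A) : auxPartner M v ∈ A :=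
  aux_bip_side' hA (auxPartner_mem_edges hM hv) hvA

-- ### nodup chain extraction
lemma aux_exists_nodup_chain {r : ℕ → ℕ → Prop} {a b : ℕ} (h : Relation.ReflTransGen r a b) :
    ∃ m : List ℕ, m.Chain' r ∧ m.head? = some a ∧ m.getLast? = some b ∧ m.Nodup := by
  obtain ⟨l, hc, hl⟩ := List.exists_isChain_cons_of_relationReflTransGen h
  suffices H : ∀ n (m : List ℕ), m.length ≤ n → m.Chain' r → m.head? = some a →
      m.getLast? = some b →
      ∃ m' : List ℕ, m'.Chain' r ∧ m'.head? = some a ∧ m'.getLast? = some b ∧ m'.Nodup by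
    refine H (a :: l).length (a :: l) le_rfl hc rfl ?_
    rw [List.getLast?_eq_getLast (List.cons_ne_nil a l), hl]
  intro n
  induction n with
  | zero => intro m hm _ hh _; interval_cases hlen : m.length <;> simp_all
  | succ n ih =>
    intro m hm hch hh hlast
    by_cases hnd : m.Nodup
    · exact ⟨m, hch, hh, hlast, hnd⟩
    obtain ⟨x, hx⟩ := List.exists_duplicate_iff_not_nodup.mpr hnd
    rw [List.duplicate_iff_sublist, List.cons_sublist_iff] at hx
    obtain ⟨r₁, r₂, hm12, hxr1, hxr2⟩ := hx
    have hxr2' : x ∈ r₂ := hxr2.subset (by simp)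
    obtain ⟨s, t, rfl⟩ := List.append_of_mem hxr2'
    obtain ⟨p, q, rfl⟩ := List.append_of_mem hxr1
    -- m = (p ++ x :: q) ++ (s ++ x :: t); new list p ++ x :: t
    have hm' : m = (p ++ x :: (q ++ s)) ++ (x :: t) := by
      rw [hm12]; simp
    refine ih (p ++ x :: t) ?_ ?_ ?_ ?_
    · have : m.length = p.length + (q ++ s).length + 1 + (x :: t).length := by
        rw [hm']; simp; ring
      have h2 : (p ++ x :: t).length = p.length + 1 + t.length := by simp; ring
      simp only [List.length_cons] at this
      omega
    · rw [hm'] at hch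
      unfold List.Chain' at hch; rw [List.isChain_append] at hch
      obtain ⟨hch1, hch2, hch3⟩ := hch
      unfold List.Chain'; rw [List.isChain_append]
      have h1 := List.isChain_append.mp hch1
      refine ⟨h1.1, hch2, ?_⟩
      intro u hu y hy
      exact h1.2.2 u hu y (by simpa using hy)
    · rw [hm'] at hh
      cases p with
      | nil => simp_all
      | cons c cs => simp_all
    · have hsome : (x :: t).getLast? = some ((x :: t).getLast (List.cons_ne_nil _ _)) :=
        List.getLast?_eq_getLast _
      rw [hm', List.getLast?_append, hsome] at hlast
      rw [List.getLast?_append, hsome]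
      simpa using hlast


lemma aux_mDir_verts {G : UGraph} {A : Set ℕ} {M : Finset (Sym2 ℕ)} {v : ℕ} :
    v ∈ (mDirection G A M).verts ↔ v ∈ G.verts ∧ v ∈ A := by
  simp [mDirection]

lemma aux_mDir_arcs {G : UGraph} {A : Set ℕ} {M : Finset (Sym2 ℕ)} {u w : ℕ} :
    (u, w) ∈ (mDirection G A M).arcs ↔
      (u ∈ G.verts ∧ u ∈ A) ∧ (w ∈ G.verts ∧ w ∈ A) ∧ u ≠ w ∧
        ∃ b, b ∉ A ∧ s(w, b) ∈ M ∧ s(u, b) ∈ G.edges := by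
  simp [mDirection, Finset.mem_filter, Finset.mem_product, and_assoc]

lemma aux_back_reach {G : UGraph} {A : Set ℕ} {M : Finset (Sym2 ℕ)}
    (hA : G.IsBipartition A) (hmc : G.MatchingCovered) (hM : G.IsPerfectMatching M)
    {u w : ℕ} (h : (u, w) ∈ (mDirection G A M).arcs) :
    Relation.ReflTransGen (fun a b => (a, b) ∈ (mDirection G A M).arcs) w u := by
  rw [aux_mDir_arcs] at h
  obtain ⟨⟨huV, huA⟩, ⟨hwV, hwA⟩, hne, b, hbA, hwbM, hubE⟩ := h
  obtain ⟨Me, hMe, heMe⟩ := hmc.2 _ hubE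
  set R := fun a b => (a, b) ∈ (mDirection G A M).arcs with hR
  set f : ℕ → ℕ := fun x => auxPartner M (auxPartner Me x) with hf
  have step : ∀ x, x ∈ G.verts → x ∈ A →
      f x ∈ G.verts ∧ f x ∈ A ∧ Relation.ReflTransGen R x (f x) := by
    intro x hxV hxA
    have hb' : auxPartner Me x ∈ G.verts := auxPartner_mem_verts hMe hxV
    have hb'A : auxPartner Me x ∉ A := auxPartner_notin_A hA hMe hxV hxA
    have hfV : f x ∈ G.verts := auxPartner_mem_verts hM hb'
    have hfA : f x ∈ A := auxPartner_in_A hA hM hb' hb'A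
    refine ⟨hfV, hfA, ?_⟩
    by_cases hxf : x = f x
    · rw [← hxf]
    · refine Relation.ReflTransGen.single ?_
      show (x, f x) ∈ (mDirection G A M).arcs
      rw [aux_mDir_arcs]
      refine ⟨⟨hxV, hxA⟩, ⟨hfV, hfA⟩, hxf, auxPartner Me x, hb'A, ?_,
        auxPartner_mem_edges hMe hxV⟩
      rw [Sym2.eq_swap]
      exact auxPartner_mem_M hM hb'
  have iter_mem : ∀ k, f^[k] u ∈ G.verts ∧ f^[k] u ∈ A := by
    intro k
    induction k with
    | zero => exact ⟨huV, huA⟩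
    | succ k ih =>
      rw [Function.iterate_succ_apply']
      exact ⟨(step _ ih.1 ih.2).1, (step _ ih.1 ih.2).2.1⟩
  have hinj : ∀ x y, x ∈ G.verts → y ∈ G.verts → f x = f y → x = y := by
    intro x y hx hy hxy
    have hbx : auxPartner Me x ∈ G.verts := auxPartner_mem_verts hMe hx
    have hby : auxPartner Me y ∈ G.verts := auxPartner_mem_verts hMe hy
    have h1 : auxPartner Me x = auxPartner Me y := by
      have := congrArg (auxPartner M) hxy
      rwa [hf, auxPartner_partner hM hbx, auxPartner_partner hM hby] at this
    have := congrArg (auxPartner Me) h1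
    rwa [auxPartner_partner hMe hx, auxPartner_partner hMe hy] at this
  have pig : ∃ i ∈ Finset.range (G.verts.card + 1), ∃ j ∈ Finset.range (G.verts.card + 1),
      i ≠ j ∧ f^[i] u = f^[j] u := by
    apply Finset.exists_ne_map_eq_of_card_lt_of_maps_to (t := G.verts)
    · simp
    · intro i _; exact (iter_mem i).1
  obtain ⟨i, -, j, -, hij, hfij⟩ := pig
  have cancel : ∀ i j, i ≤ j → f^[i] u = f^[j] u → f^[j - i] u = u := by
    intro i
    induction i with
    | zero => intro j _ h0; simpa using h0.symm
    | succ i ih =>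
      intro j hij h0
      obtain ⟨j', rfl⟩ : ∃ j', j = j' + 1 := ⟨j - 1, by omega⟩
      rw [Function.iterate_succ_apply', Function.iterate_succ_apply'] at h0
      have h1 := hinj _ _ (iter_mem i).1 (iter_mem j').1 h0
      have h2 := ih j' (by omega) h1
      simpa [Nat.succ_sub_succ] using h2
  have hk : ∃ k, 1 ≤ k ∧ f^[k] u = u := by
    rcases Nat.lt_or_ge i j with h' | h'
    · exact ⟨j - i, by omega, cancel i j (by omega) hfij⟩
    · exact ⟨i - j, by omega, cancel j i (by omega) hfij.symm⟩
  obtain ⟨k, hk1, hku⟩ := hk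
  have reach_iter : ∀ m, 1 ≤ m → Relation.ReflTransGen R (f u) (f^[m] u) := by
    intro m hm
    induction m with
    | zero => omega
    | succ m ih =>
      rcases Nat.eq_or_lt_of_le hm with h' | h'
      · rw [← h', Function.iterate_one]
      · have hm1 : 1 ≤ m := by omega
        refine (ih hm1).trans ?_
        rw [Function.iterate_succ_apply']
        exact (step _ (iter_mem m).1 (iter_mem m).2).2.2
  have hfu : f u = w := by
    have h1 : auxPartner Me u = b := auxPartner_eq hMe.1 heMe
    have h2 : auxPartner M b = w := auxPartner_eq hM.1 (by rw [Sym2.eq_swap]; exact hwbM)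
    rw [hf]; simp only; rw [h1, h2]
  have hr := reach_iter k hk1
  rw [hku, hfu] at hr
  exact hr


lemma aux_mDir_strong {G : UGraph} {A : Set ℕ} {M : Finset (Sym2 ℕ)}
    (hA : G.IsBipartition A) (hmc : G.MatchingCovered) (hM : G.IsPerfectMatching M) :
    (mDirection G A M).StronglyConnected := by
  set R := fun a b => (a, b) ∈ (mDirection G A M).arcs with hR
  set π : ℕ → ℕ := fun x => if x ∈ A then x else auxPartner M x with hπ
  have one_dir : ∀ x y, s(x, y) ∈ G.edges → x ∈ A →
      Relation.ReflTransGen R x (auxPartner M y) ∧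
      Relation.ReflTransGen R (auxPartner M y) x := by
    intro x y he hxA
    have hxV : x ∈ G.verts := G.mem_verts _ he _ (Sym2.mem_mk_left _ _)
    have hyV : y ∈ G.verts := G.mem_verts _ he _ (Sym2.mem_mk_right _ _)
    have hyA : y ∉ A := aux_bip_side hA he hxA
    have hwV : auxPartner M y ∈ G.verts := auxPartner_mem_verts hM hyV
    have hwA : auxPartner M y ∈ A := auxPartner_in_A hA hM hyV hyA
    by_cases hxw : x = auxPartner M y
    · rw [← hxw]; exact ⟨.refl, .refl⟩
    · have harc : (x, auxPartner M y) ∈ (mDirection G A M).arcs := by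
        rw [aux_mDir_arcs]
        refine ⟨⟨hxV, hxA⟩, ⟨hwV, hwA⟩, hxw, y, hyA, ?_, he⟩
        rw [Sym2.eq_swap]
        exact auxPartner_mem_M hM hyV
      exact ⟨Relation.ReflTransGen.single harc, aux_back_reach hA hmc hM harc⟩
  have hmut : ∀ x y, s(x, y) ∈ G.edges →
      Relation.ReflTransGen R (π x) (π y) ∧ Relation.ReflTransGen R (π y) (π x) := by
    intro x y he
    by_cases hxA : x ∈ A
    · have hyA : y ∉ A := aux_bip_side hA he hxA
      rw [hπ]; simp only [if_pos hxA, if_neg hyA]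
      exact one_dir x y he hxA
    · have hyA : y ∈ A := aux_bip_side' hA he hxA
      rw [hπ]; simp only [if_neg hxA, if_pos hyA]
      have := one_dir y x (by rwa [Sym2.eq_swap]) hyA
      exact ⟨this.2, this.1⟩
  constructor
  · obtain ⟨v, hv⟩ := hmc.1.1
    by_cases hvA : v ∈ A
    · exact ⟨v, aux_mDir_verts.mpr ⟨hv, hvA⟩⟩
    · exact ⟨auxPartner M v, aux_mDir_verts.mpr
        ⟨auxPartner_mem_verts hM hv, auxPartner_in_A hA hM hv hvA⟩⟩
  · intro u hu v hv
    rw [aux_mDir_verts] at hu hv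
    have hreach := hmc.1.2 u hu.1 v hv.1
    have key : ∀ y, Relation.ReflTransGen G.Adj u y →
        Relation.ReflTransGen R (π u) (π y) := by
      intro y hy
      induction hy with
      | refl => exact .refl
      | tail h1 h2 ih => exact ih.trans (hmut _ _ h2).1
    have hk := key v hreach
    rw [hπ] at hk
    simp only [if_pos hu.2, if_pos hv.2] at hk
    exact hk

lemma aux_strong_of_iso {D D' : Dgraph} (h : DgraphIso D D') (h' : D'.StronglyConnected) :
    D.StronglyConnected := by
  obtain ⟨f, hbij, harc⟩ := h
  constructor
  · obtain ⟨v', hv'⟩ := h'.1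
    obtain ⟨v, hv, -⟩ := hbij.2.2 (Finset.mem_coe.mpr hv')
    exact ⟨v, hv⟩
  · intro u hu v hv
    have hfu : f u ∈ D'.verts := hbij.1 (Finset.mem_coe.mpr hu)
    have hfv : f v ∈ D'.verts := hbij.1 (Finset.mem_coe.mpr hv)
    have hr := h'.2 (f u) hfu (f v) hfv
    have key : ∀ y', Relation.ReflTransGen (fun a b => (a, b) ∈ D'.arcs) (f u) y' →
        y' ∈ D'.verts → ∃ y, y ∈ D.verts ∧ f y = y' ∧
          Relation.ReflTransGen (fun a b => (a, b) ∈ D.arcs) u y := by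
      intro y' hy'
      induction hy' with
      | refl => exact fun _ => ⟨u, hu, rfl, .refl⟩
      | @tail x' y' h1 h2 ih =>
        intro hy'V
        obtain ⟨y, hy, hfy, hr0⟩ := ih (D'.arcs_mem _ h2).1
        obtain ⟨z, hz, hfz⟩ := hbij.2.2 (Finset.mem_coe.mpr (D'.arcs_mem _ h2).2)
        have hz' : z ∈ D.verts := hz
        have harc2 : (y, z) ∈ D.arcs := by
          rw [harc y hy z hz', hfy, hfz]
          exact h2
        exact ⟨z, hz', hfz, hr0.tail harc2⟩
    obtain ⟨y, hy, hfy, hr0⟩ := key (f v) hr hfv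
    have : y = v := hbij.2.1 (Finset.mem_coe.mpr hy) (Finset.mem_coe.mpr hv) hfy
    rwa [this] at hr0


noncomputable def canonG (D : Dgraph) : UGraph where
  verts := D.verts.image (fun v => 2 * v) ∪ D.verts.image (fun v => 2 * v + 1)
  edges := D.verts.image (fun v => s(2 * v, 2 * v + 1)) ∪
    D.arcs.image (fun a => s(2 * a.1, 2 * a.2 + 1))
  no_loops := by
    intro e he
    rw [Finset.mem_union] at he
    rcases he with he | he <;> obtain ⟨x, hx, rfl⟩ := Finset.mem_image.mp he <;>
      rw [Sym2.mk_isDiag_iff] <;> omega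
  mem_verts := by
    intro e he v hv
    rw [Finset.mem_union] at he
    rcases he with he | he <;> obtain ⟨x, hx, rfl⟩ := Finset.mem_image.mp he <;>
        rw [Sym2.mem_iff] at hv
    · rcases hv with rfl | rfl
      · exact Finset.mem_union_left _ (Finset.mem_image_of_mem _ hx)
      · exact Finset.mem_union_right _ (Finset.mem_image_of_mem _ hx)
    · rcases hv with rfl | rfl
      · exact Finset.mem_union_left _ (Finset.mem_image_of_mem _ (D.arcs_mem _ hx).1)
      · exact Finset.mem_union_right _ (Finset.mem_image_of_mem _ (D.arcs_mem _ hx).2)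

noncomputable def canonM (D : Dgraph) : Finset (Sym2 ℕ) :=
  D.verts.image (fun v => s(2 * v, 2 * v + 1))

def canonA : Set ℕ := {n | n % 2 = 0}

lemma aux_sym2_parity {u v u' v' : ℕ} :
    s(2 * u, 2 * v + 1) = s(2 * u', 2 * v' + 1) ↔ u = u' ∧ v = v' := by
  rw [Sym2.eq_iff]; omega

lemma aux_mem_canonM {D : Dgraph} {u v : ℕ} :
    s(2 * u, 2 * v + 1) ∈ canonM D ↔ u = v ∧ u ∈ D.verts := by
  simp only [canonM, Finset.mem_image]
  constructor
  · rintro ⟨x, hx, he⟩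
    rw [aux_sym2_parity] at he
    obtain ⟨rfl, rfl⟩ := he
    exact ⟨rfl, hx⟩
  · rintro ⟨rfl, hu⟩; exact ⟨u, hu, rfl⟩

lemma aux_mem_canonE {D : Dgraph} {u v : ℕ} :
    s(2 * u, 2 * v + 1) ∈ (canonG D).edges ↔ (u = v ∧ u ∈ D.verts) ∨ (u, v) ∈ D.arcs := by
  simp only [canonG, Finset.mem_union, Finset.mem_image]
  constructor
  · rintro (⟨x, hx, he⟩ | ⟨a, ha, he⟩)
    · rw [aux_sym2_parity] at he
      obtain ⟨rfl, rfl⟩ := he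
      exact Or.inl ⟨rfl, hx⟩
    · rw [aux_sym2_parity] at he
      right
      have : a = (u, v) := Prod.ext he.1 he.2
      rwa [this] at ha
  · rintro (⟨rfl, hu⟩ | ha)
    · exact Or.inl ⟨u, hu, rfl⟩
    · exact Or.inr ⟨(u, v), ha, rfl⟩

lemma aux_mem_canonV {D : Dgraph} {x : ℕ} :
    x ∈ (canonG D).verts ↔ (∃ v ∈ D.verts, x = 2 * v) ∨ ∃ v ∈ D.verts, x = 2 * v + 1 := by
  simp only [canonG, Finset.mem_union, Finset.mem_image]
  constructor
  · rintro (⟨v, hv, h⟩ | ⟨v, hv, h⟩)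
    · exact Or.inl ⟨v, hv, h.symm⟩
    · exact Or.inr ⟨v, hv, h.symm⟩
  · rintro (⟨v, hv, h⟩ | ⟨v, hv, h⟩)
    · exact Or.inl ⟨v, hv, h.symm⟩
    · exact Or.inr ⟨v, hv, h.symm⟩

lemma aux_canonG_bip (D : Dgraph) : (canonG D).IsBipartition canonA := by
  intro e he
  simp only [canonG, Finset.mem_union, Finset.mem_image] at he
  rcases he with ⟨x, hx, rfl⟩ | ⟨a, ha, rfl⟩
  · exact ⟨2 * x, 2 * x + 1, rfl, by simp [canonA], by simp [canonA]⟩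
  · exact ⟨2 * a.1, 2 * a.2 + 1, rfl, by simp [canonA], by simp [canonA]⟩

lemma aux_canonM_pm (D : Dgraph) : (canonG D).IsPerfectMatching (canonM D) := by
  refine ⟨⟨?_, ?_⟩, ?_⟩
  · intro e he
    simp only [canonM, Finset.mem_image] at he
    obtain ⟨x, hx, rfl⟩ := he
    exact Finset.mem_union_left _ (Finset.mem_image_of_mem _ hx)
  · intro e he f hf hef w hwe hwf
    simp only [canonM, Finset.mem_image] at he hf
    obtain ⟨x, hx, rfl⟩ := he
    obtain ⟨y, hy, rfl⟩ := hf
    rw [Sym2.mem_iff] at hwe hwf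
    have hxy : x ≠ y := fun h => hef (by rw [h])
    omega
  · intro w hw
    rw [aux_mem_canonV] at hw
    rcases hw with ⟨v, hv, rfl⟩ | ⟨v, hv, rfl⟩
    · exact ⟨s(2 * v, 2 * v + 1), Finset.mem_image_of_mem _ hv, Sym2.mem_mk_left _ _⟩
    · exact ⟨s(2 * v, 2 * v + 1), Finset.mem_image_of_mem _ hv, Sym2.mem_mk_right _ _⟩

lemma aux_canonG_conn {D : Dgraph} (hD : D.StronglyConnected) : (canonG D).Connected := by
  have adjM : ∀ v ∈ D.verts, (canonG D).Adj (2 * v) (2 * v + 1) := by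
    intro v hv
    exact aux_mem_canonE.mpr (Or.inl ⟨rfl, hv⟩)
  have adjM' : ∀ v ∈ D.verts, (canonG D).Adj (2 * v + 1) (2 * v) := by
    intro v hv
    show s(2 * v + 1, 2 * v) ∈ (canonG D).edges
    rw [Sym2.eq_swap]
    exact adjM v hv
  have adjA : ∀ x y, (x, y) ∈ D.arcs → (canonG D).Adj (2 * x) (2 * y + 1) := by
    intro x y ha
    exact aux_mem_canonE.mpr (Or.inr ha)
  have lift : ∀ u v : ℕ, Relation.ReflTransGen (fun a b => (a, b) ∈ D.arcs) u v →
      Relation.ReflTransGen (canonG D).Adj (2 * u) (2 * v) := by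
    intro u v h
    induction h with
    | refl => exact .refl
    | @tail x y h1 h2 ih =>
      exact ((ih.tail (adjA x y h2)).tail (adjM' y (D.arcs_mem _ h2).2))
  constructor
  · obtain ⟨v, hv⟩ := hD.1
    exact ⟨2 * v, aux_mem_canonV.mpr (Or.inl ⟨v, hv, rfl⟩)⟩
  · intro x hx y hy
    rw [aux_mem_canonV] at hx hy
    have main : ∀ u ∈ D.verts, ∀ v ∈ D.verts,
        Relation.ReflTransGen (canonG D).Adj (2 * u) (2 * v) := by
      intro u hu v hv
      exact lift u v (hD.2 u hu v hv)
    rcases hx with ⟨u, hu, rfl⟩ | ⟨u, hu, rfl⟩ <;> rcases hy with ⟨v, hv, rfl⟩ | ⟨v, hv, rfl⟩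
    · exact main u hu v hv
    · exact (main u hu v hv).tail (adjM v hv)
    · exact (Relation.ReflTransGen.single (adjM' u hu)).trans (main u hu v hv)
    · exact ((Relation.ReflTransGen.single (adjM' u hu)).trans (main u hu v hv)).tail
        (adjM v hv)

lemma aux_sigma_pm {D : Dgraph} {σ : ℕ → ℕ}
    (hmap : ∀ w ∈ D.verts, σ w ∈ D.verts)
    (hinj : ∀ x ∈ D.verts, ∀ y ∈ D.verts, σ x = σ y → x = y)
    (harc : ∀ w ∈ D.verts, σ w = w ∨ (w, σ w) ∈ D.arcs) :
    (canonG D).IsPerfectMatching (D.verts.image fun w => s(2 * w, 2 * σ w + 1)) := by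
  have hsurj : ∀ w ∈ D.verts, ∃ w' ∈ D.verts, σ w' = w := by
    have himg : D.verts.image σ = D.verts := by
      apply Finset.eq_of_subset_of_card_le
      · intro x hx
        obtain ⟨w, hw, rfl⟩ := Finset.mem_image.mp hx
        exact hmap w hw
      · rw [Finset.card_image_of_injOn]
        intro x hx y hy
        exact hinj x hx y hy
    intro w hw
    have : w ∈ D.verts.image σ := by rw [himg]; exact hw
    obtain ⟨w', hw', h⟩ := Finset.mem_image.mp this
    exact ⟨w', hw', h⟩
  refine ⟨⟨?_, ?_⟩, ?_⟩
  · intro e he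
    obtain ⟨w, hw, rfl⟩ := Finset.mem_image.mp he
    rcases harc w hw with h | h
    · exact aux_mem_canonE.mpr (Or.inl ⟨h.symm, hw⟩)
    · exact aux_mem_canonE.mpr (Or.inr h)
  · intro e he f hf hef w hwe hwf
    obtain ⟨x, hx, rfl⟩ := Finset.mem_image.mp he
    obtain ⟨y, hy, rfl⟩ := Finset.mem_image.mp hf
    rw [Sym2.mem_iff] at hwe hwf
    have hxy : x ≠ y := fun h => hef (by rw [h])
    have hσ : σ x = σ y → x = y := hinj x hx y hy
    omega
  · intro w hw
    rw [aux_mem_canonV] at hw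
    rcases hw with ⟨v, hv, rfl⟩ | ⟨v, hv, rfl⟩
    · exact ⟨s(2 * v, 2 * σ v + 1), Finset.mem_image_of_mem _ hv, Sym2.mem_mk_left _ _⟩
    · obtain ⟨w', hw', hσw⟩ := hsurj v hv
      exact ⟨s(2 * w', 2 * σ w' + 1), Finset.mem_image_of_mem _ hw',
        by rw [hσw]; exact Sym2.mem_mk_right _ _⟩

lemma aux_canonG_mc {D : Dgraph} (hD : D.StronglyConnected) : (canonG D).MatchingCovered := by
  refine ⟨aux_canonG_conn hD, ?_⟩
  intro e he
  rcases Finset.mem_union.mp he with he' | he'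
  · exact ⟨canonM D, aux_canonM_pm D, he'⟩
  · obtain ⟨a, ha, rfl⟩ := Finset.mem_image.mp he'
    obtain ⟨u, v⟩ := a
    simp only at *
    have huv : u ≠ v := D.no_loops _ ha
    have huV : u ∈ D.verts := (D.arcs_mem _ ha).1
    have hvV : v ∈ D.verts := (D.arcs_mem _ ha).2
    obtain ⟨l, hch, hh, hlast, hnd⟩ := aux_exists_nodup_chain (hD.2 v hvV u huV)
    have hne : l ≠ [] := by rintro rfl; simp at hh
    have hn : 0 < l.length := List.length_pos_iff.mpr hne
    have hhead : l.get ⟨0, hn⟩ = v := by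
      rw [List.get_mk_zero]
      rw [List.head?_eq_head hne] at hh
      exact Option.some.inj hh
    have hn1 : l.length - 1 < l.length := by omega
    have hlast' : l.get ⟨l.length - 1, hn1⟩ = u := by
      rw [List.get_eq_getElem, ← List.getLast_eq_getElem hne]
      rw [List.getLast?_eq_getLast hne] at hlast
      exact Option.some.inj hlast
    have hlen2 : 2 ≤ l.length := by
      by_contra hcon
      apply huv
      rw [← hlast', ← hhead]
      congr 1
      exact Fin.ext (show l.length - 1 = 0 by omega)
    set σ : ℕ → ℕ := fun x => if h : x ∈ l then
      l.get ⟨(l.idxOf x + 1) % l.length, Nat.mod_lt _ hn⟩ else x with hσ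
    have hσnot : ∀ x, x ∉ l → σ x = x := fun x hx => dif_neg hx
    have hidx : ∀ x, x ∈ l → σ x =
        l.get ⟨(l.idxOf x + 1) % l.length, Nat.mod_lt _ hn⟩ := fun x hx => dif_pos hx
    have hmod : ∀ i, i < l.length →
        (i + 1) % l.length = if i + 1 = l.length then 0 else i + 1 := by
      intro i hi
      split
      · next h => rw [h, Nat.mod_self]
      · next h => exact Nat.mod_eq_of_lt (by omega)
    have hmem_verts : ∀ x ∈ l, x ∈ D.verts := by
      intro x hx
      obtain ⟨i, rfl⟩ := List.mem_iff_get.mp hx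
      by_cases hi' : (i : ℕ) < l.length - 1
      · exact (D.arcs_mem _ (List.isChain_iff_getElem.mp hch i (by omega))).1
      · have hieq : i = ⟨l.length - 1, hn1⟩ := Fin.ext (show (i : ℕ) = l.length - 1 by omega)
        rw [hieq, hlast']
        exact huV
    have hσl : ∀ x ∈ l, σ x ∈ l := by
      intro x hx
      rw [hidx x hx]
      exact List.get_mem _ _
    have hmap : ∀ w ∈ D.verts, σ w ∈ D.verts := by
      intro w hw
      by_cases hwl : w ∈ l
      · exact hmem_verts _ (hσl w hwl)
      · rw [hσnot w hwl]; exact hw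
    have hinj : ∀ x ∈ D.verts, ∀ y ∈ D.verts, σ x = σ y → x = y := by
      intro x hx y hy hxy
      by_cases hxl : x ∈ l <;> by_cases hyl : y ∈ l
      · rw [hidx x hxl, hidx y hyl] at hxy
        have hix : l.idxOf x < l.length := List.idxOf_lt_length_iff.mpr hxl
        have hiy : l.idxOf y < l.length := List.idxOf_lt_length_iff.mpr hyl
        have heq : (l.idxOf x + 1) % l.length = (l.idxOf y + 1) % l.length :=
          congrArg Fin.val ((hnd.get_inj_iff).mp hxy)
        have h1 := hmod _ hix
        have h2 := hmod _ hiy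
        have hixy : l.idxOf x = l.idxOf y := by
          rw [h1, h2] at heq
          split at heq <;> split at heq <;> omega
        have h3 := List.idxOf_get hix
        have h5 : (⟨List.idxOf x l, hix⟩ : Fin l.length) = ⟨List.idxOf y l, hiy⟩ :=
          Fin.ext hixy
        rw [h5] at h3
        exact (h3.symm.trans (List.idxOf_get hiy))
      · exfalso
        have h1 : σ x ∈ l := hσl x hxl
        rw [hxy, hσnot y hyl] at h1
        exact hyl h1
      · exfalso
        have h1 : σ y ∈ l := hσl y hyl
        rw [← hxy, hσnot x hxl] at h1
        exact hxl h1
      · rw [hσnot x hxl, hσnot y hyl] at hxy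
        exact hxy
    have harc : ∀ w ∈ D.verts, σ w = w ∨ (w, σ w) ∈ D.arcs := by
      intro w hw
      by_cases hwl : w ∈ l
      · right
        rw [hidx w hwl]
        have hiw : l.idxOf w < l.length := List.idxOf_lt_length_iff.mpr hwl
        by_cases h2 : l.idxOf w + 1 = l.length
        · have hm0 : (l.idxOf w + 1) % l.length = 0 := by rw [h2, Nat.mod_self]
          have hgv : l.get ⟨(l.idxOf w + 1) % l.length, Nat.mod_lt _ hn⟩ = v := by
            rw [← hhead]
            congr 1
            exact Fin.ext hm0
          have h3 := List.idxOf_get hiw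
          have h4 : l.idxOf w = l.length - 1 := by omega
          have h4fin : (⟨l.idxOf w, hiw⟩ : Fin l.length) = ⟨l.length - 1, hn1⟩ :=
            Fin.ext h4
          rw [h4fin] at h3
          have hwu : w = u := h3.symm.trans hlast'
          rw [hgv, hwu]
          exact ha
        · have hm1 : (l.idxOf w + 1) % l.length = l.idxOf w + 1 :=
            Nat.mod_eq_of_lt (by omega)
          have harc2 : (l.get ⟨l.idxOf w, by omega⟩, l.get ⟨l.idxOf w + 1, by omega⟩) ∈ D.arcs :=
            List.isChain_iff_getElem.mp hch (l.idxOf w) (by omega)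
          have hgw : l.get ⟨l.idxOf w, by omega⟩ = w := List.idxOf_get _
          rw [hgw] at harc2
          have hfin : (⟨(l.idxOf w + 1) % l.length, Nat.mod_lt _ hn⟩ : Fin l.length) =
              ⟨l.idxOf w + 1, by omega⟩ := Fin.ext hm1
          rw [hfin]
          exact harc2
      · left; exact hσnot w hwl
    have hul : u ∈ l := by rw [← hlast']; exact List.get_mem _ _
    have hσu : σ u = v := by
      rw [hidx u hul]
      have hiu : l.idxOf u = l.length - 1 := by
        have h5 := List.get_idxOf hnd ⟨l.length - 1, hn1⟩
        rw [hlast'] at h5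
        exact h5
      rw [← hhead]
      congr 1
      exact Fin.ext (show (l.idxOf u + 1) % l.length = 0 by
        rw [hiu, (show l.length - 1 + 1 = l.length by omega), Nat.mod_self])
    refine ⟨D.verts.image fun w => s(2 * w, 2 * σ w + 1),
      aux_sigma_pm hmap hinj harc, ?_⟩
    apply Finset.mem_image.mpr
    exact ⟨u, huV, by rw [hσu]⟩

lemma aux_canonA_even (v : ℕ) : 2 * v ∈ canonA := by simp only [canonA, Set.mem_setOf_eq]; omega

lemma aux_canonA_odd (v : ℕ) : 2 * v + 1 ∉ canonA := by simp only [canonA, Set.mem_setOf_eq]; omega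

lemma aux_canon_iso (D : Dgraph) : DgraphIso D (mDirection (canonG D) canonA (canonM D)) := by
  refine ⟨fun v => 2 * v, ⟨?_, ?_, ?_⟩, ?_⟩
  · intro v hv
    show 2 * v ∈ (mDirection (canonG D) canonA (canonM D)).verts
    exact aux_mDir_verts.mpr ⟨aux_mem_canonV.mpr (Or.inl ⟨v, hv, rfl⟩), aux_canonA_even v⟩
  · intro x _ y _ h
    simp only at h
    omega
  · intro x hx
    have hx' : x ∈ (mDirection (canonG D) canonA (canonM D)).verts := hx
    rw [aux_mDir_verts, aux_mem_canonV] at hx'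
    obtain ⟨hv, hA⟩ := hx'
    rcases hv with ⟨v, hv, rfl⟩ | ⟨v, hv, rfl⟩
    · exact ⟨v, hv, rfl⟩
    · exact absurd hA (aux_canonA_odd v)
  · intro u hu v hv
    simp only
    constructor
    · intro h
      rw [aux_mDir_arcs]
      have huv : u ≠ v := D.no_loops _ h
      refine ⟨⟨aux_mem_canonV.mpr (Or.inl ⟨u, hu, rfl⟩), aux_canonA_even u⟩,
        ⟨aux_mem_canonV.mpr (Or.inl ⟨v, hv, rfl⟩), aux_canonA_even v⟩,
        by omega, 2 * v + 1, aux_canonA_odd v,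
        aux_mem_canonM.mpr ⟨rfl, hv⟩, aux_mem_canonE.mpr (Or.inr h)⟩
    · intro h
      rw [aux_mDir_arcs] at h
      obtain ⟨-, -, hne, b, hbA, hbM, hbE⟩ := h
      have hb : b = 2 * v + 1 := by
        simp only [canonM, Finset.mem_image] at hbM
        obtain ⟨x, hx, hxe⟩ := hbM
        rw [Sym2.eq_iff] at hxe
        rcases hxe with ⟨h1, h2⟩ | ⟨h1, h2⟩ <;> omega
      subst hb
      rw [aux_mem_canonE] at hbE
      rcases hbE with ⟨h1, -⟩ | h1
      · exact absurd (by omega : (2 : ℕ) * u = 2 * v) hne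
      · exact h1

lemma aux_no_same_side_edge {G' : UGraph} {A' : Set ℕ} (hA' : G'.IsBipartition A')
    {w1 w2 : ℕ} (h12 : (w1 ∈ A' ∧ w2 ∈ A') ∨ (w1 ∉ A' ∧ w2 ∉ A')) :
    s(w1, w2) ∉ G'.edges := by
  intro he
  obtain ⟨a, b, heq, haA, hbA⟩ := hA' _ he
  rw [Sym2.eq_iff] at heq
  rcases heq with ⟨rfl, rfl⟩ | ⟨rfl, rfl⟩ <;> rcases h12 with ⟨h1, h2⟩ | ⟨h1, h2⟩ <;>
    first
      | exact hbA h2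
      | exact h1 haA
      | exact hbA h1
      | exact h2 haA

lemma aux_unique {D : Dgraph} (G' : UGraph) (A' : Set ℕ) (M' : Finset (Sym2 ℕ))
    (hA' : G'.IsBipartition A') (hmc' : G'.MatchingCovered) (hM' : G'.IsPerfectMatching M')
    (hiso : DgraphIso D (mDirection G' A' M')) :
    MatchedUGraphIso (canonG D) (canonM D) G' M' := by
  obtain ⟨g, hbij, harc⟩ := hiso
  set p : ℕ → ℕ := auxPartner M' with hp
  have hgV : ∀ v ∈ D.verts, g v ∈ G'.verts ∧ g v ∈ A' := by
    intro v hv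
    have := hbij.1 (Finset.mem_coe.mpr hv)
    exact aux_mDir_verts.mp this
  have hpV : ∀ v ∈ D.verts, p (g v) ∈ G'.verts :=
    fun v hv => auxPartner_mem_verts hM' (hgV v hv).1
  have hpA : ∀ v ∈ D.verts, p (g v) ∉ A' :=
    fun v hv => auxPartner_notin_A hA' hM' (hgV v hv).1 (hgV v hv).2
  have hpM : ∀ v ∈ D.verts, s(g v, p (g v)) ∈ M' :=
    fun v hv => auxPartner_mem_M hM' (hgV v hv).1
  have hginj : ∀ u ∈ D.verts, ∀ v ∈ D.verts, g u = g v → u = v := by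
    intro u hu v hv h
    exact hbij.2.1 (Finset.mem_coe.mpr hu) (Finset.mem_coe.mpr hv) h
  have edge_iff : ∀ u ∈ D.verts, ∀ v ∈ D.verts,
      (s(g u, p (g v)) ∈ G'.edges ↔ (u = v ∨ (u, v) ∈ D.arcs)) := by
    intro u hu v hv
    constructor
    · intro hE
      by_cases huv : u = v
      · exact Or.inl huv
      · right
        have harc' : (g u, g v) ∈ (mDirection G' A' M').arcs := by
          rw [aux_mDir_arcs]
          exact ⟨hgV u hu, hgV v hv, fun h => huv (hginj u hu v hv h),
            p (g v), hpA v hv, hpM v hv, hE⟩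
        exact (harc u hu v hv).mpr harc'
    · rintro (rfl | h)
      · exact hM'.1.1 (hpM u hu)
      · have harc' := (harc u hu v hv).mp h
        rw [aux_mDir_arcs] at harc'
        obtain ⟨-, -, -, b, hbA, hbM, hbE⟩ := harc'
        have : p (g v) = b := auxPartner_eq hM'.1 hbM
        rwa [this]
  have M_iff : ∀ u ∈ D.verts, ∀ v ∈ D.verts, (s(g u, p (g v)) ∈ M' ↔ u = v) := by
    intro u hu v hv
    constructor
    · intro h
      have h1 : s(p (g v), g u) ∈ M' := by rwa [Sym2.eq_swap] at h
      have h2 : p (p (g v)) = g u := auxPartner_eq hM'.1 h1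
      have h3 : p (p (g v)) = g v := auxPartner_partner hM' (hgV v hv).1
      exact hginj u hu v hv (h2.symm.trans h3)
    · rintro rfl
      exact hpM u hu
  set F : ℕ → ℕ := fun x => if x % 2 = 0 then g (x / 2) else p (g (x / 2)) with hF
  have hF0 : ∀ v : ℕ, F (2 * v) = g v := by
    intro v
    rw [hF]
    simp only
    rw [if_pos (by omega : 2 * v % 2 = 0)]
    congr 1
    omega
  have hF1 : ∀ v : ℕ, F (2 * v + 1) = p (g v) := by
    intro v
    rw [hF]
    simp only
    rw [if_neg (by omega : ¬ (2 * v + 1) % 2 = 0)]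
    congr 2
    omega
  have hLHSparity : ∀ u v : ℕ, s(2 * u, 2 * v) ∉ (canonG D).edges ∧
      s(2 * u + 1, 2 * v + 1) ∉ (canonG D).edges := by
    intro u v
    constructor <;> intro h <;>
      simp only [canonG, Finset.mem_union, Finset.mem_image] at h <;>
      rcases h with ⟨x, hx, hxe⟩ | ⟨a, ha, hxe⟩ <;> rw [Sym2.eq_iff] at hxe <;>
      rcases hxe with ⟨h1, h2⟩ | ⟨h1, h2⟩ <;> omega
  refine ⟨F, ⟨?_, ?_, ?_⟩, ?_, ?_⟩
  · intro x hx
    have hx' : x ∈ (canonG D).verts := hx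
    rw [aux_mem_canonV] at hx'
    rcases hx' with ⟨v, hv, rfl⟩ | ⟨v, hv, rfl⟩
    · show F (2 * v) ∈ G'.verts
      rw [hF0]
      exact (hgV v hv).1
    · show F (2 * v + 1) ∈ G'.verts
      rw [hF1]
      exact hpV v hv
  · intro x hx y hy hxy
    have hx' : x ∈ (canonG D).verts := hx
    have hy' : y ∈ (canonG D).verts := hy
    rw [aux_mem_canonV] at hx' hy'
    rcases hx' with ⟨u, hu, rfl⟩ | ⟨u, hu, rfl⟩ <;> rcases hy' with ⟨v, hv, rfl⟩ | ⟨v, hv, rfl⟩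
    · rw [hF0, hF0] at hxy
      have := hginj u hu v hv hxy
      omega
    · rw [hF0, hF1] at hxy
      exact absurd (hxy ▸ (hgV u hu).2) (hpA v hv)
    · rw [hF1, hF0] at hxy
      exact absurd (hpA u hu (by rw [hxy]; exact (hgV v hv).2)) not_false
    · rw [hF1, hF1] at hxy
      have h1 : p (p (g u)) = p (p (g v)) := by rw [hxy]
      rw [hp] at h1
      rw [auxPartner_partner hM' (hgV u hu).1, auxPartner_partner hM' (hgV v hv).1] at h1
      have := hginj u hu v hv h1
      omega
  · intro y hy
    have hy' : y ∈ G'.verts := hy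
    by_cases hyA : y ∈ A'
    · have : y ∈ (mDirection G' A' M').verts := aux_mDir_verts.mpr ⟨hy', hyA⟩
      obtain ⟨v, hv, hgv⟩ := hbij.2.2 (Finset.mem_coe.mpr this)
      refine ⟨2 * v, ?_, ?_⟩
      · exact Finset.mem_coe.mpr (aux_mem_canonV.mpr (Or.inl ⟨v, hv, rfl⟩))
      · rw [hF0]; exact hgv
    · have hpy : p y ∈ G'.verts := auxPartner_mem_verts hM' hy'
      have hpyA : p y ∈ A' := auxPartner_in_A hA' hM' hy' hyA
      have : p y ∈ (mDirection G' A' M').verts := aux_mDir_verts.mpr ⟨hpy, hpyA⟩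
      obtain ⟨v, hv, hgv⟩ := hbij.2.2 (Finset.mem_coe.mpr this)
      refine ⟨2 * v + 1, ?_, ?_⟩
      · exact Finset.mem_coe.mpr (aux_mem_canonV.mpr (Or.inr ⟨v, hv, rfl⟩))
      · rw [hF1, hgv]
        exact auxPartner_partner hM' hy'
  · intro x hx y hy
    rw [aux_mem_canonV] at hx hy
    rcases hx with ⟨u, hu, rfl⟩ | ⟨u, hu, rfl⟩ <;> rcases hy with ⟨v, hv, rfl⟩ | ⟨v, hv, rfl⟩
    · rw [hF0, hF0]
      constructor <;> intro h
      · exact absurd h (hLHSparity u v).1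
      · exact absurd h (aux_no_same_side_edge hA' (Or.inl ⟨(hgV u hu).2, (hgV v hv).2⟩))
    · rw [hF0, hF1, aux_mem_canonE, edge_iff u hu v hv]
      constructor
      · rintro (⟨rfl, -⟩ | h)
        · exact Or.inl rfl
        · exact Or.inr h
      · rintro (rfl | h)
        · exact Or.inl ⟨rfl, hu⟩
        · exact Or.inr h
    · rw [hF1, hF0, (Sym2.eq_swap : s(2 * u + 1, 2 * v) = _),
        (Sym2.eq_swap : s(p (g u), g v) = _), aux_mem_canonE, edge_iff v hv u hu]
      constructor
      · rintro (⟨rfl, -⟩ | h)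
        · exact Or.inl rfl
        · exact Or.inr h
      · rintro (rfl | h)
        · exact Or.inl ⟨rfl, hv⟩
        · exact Or.inr h
    · rw [hF1, hF1]
      constructor <;> intro h
      · exact absurd h (hLHSparity u v).2
      · exact absurd h (aux_no_same_side_edge hA' (Or.inr ⟨hpA u hu, hpA v hv⟩))
  · intro x hx y hy
    rw [aux_mem_canonV] at hx hy
    rcases hx with ⟨u, hu, rfl⟩ | ⟨u, hu, rfl⟩ <;> rcases hy with ⟨v, hv, rfl⟩ | ⟨v, hv, rfl⟩
    · rw [hF0, hF0]
      constructor <;> intro h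
      · exfalso
        simp only [canonM, Finset.mem_image] at h
        obtain ⟨x, hx, hxe⟩ := h
        rw [Sym2.eq_iff] at hxe
        rcases hxe with ⟨h1, h2⟩ | ⟨h1, h2⟩ <;> omega
      · exact absurd (hM'.1.1 h)
          (aux_no_same_side_edge hA' (Or.inl ⟨(hgV u hu).2, (hgV v hv).2⟩))
    · rw [hF0, hF1, aux_mem_canonM, M_iff u hu v hv]
      constructor
      · rintro ⟨rfl, -⟩; rfl
      · rintro rfl; exact ⟨rfl, hu⟩
    · rw [hF1, hF0, (Sym2.eq_swap : s(2 * u + 1, 2 * v) = _),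
        (Sym2.eq_swap : s(p (g u), g v) = _), aux_mem_canonM, M_iff v hv u hu]
      constructor
      · rintro ⟨rfl, -⟩; rfl
      · rintro rfl; exact ⟨rfl, hv⟩
    · rw [hF1, hF1]
      constructor <;> intro h
      · exfalso
        simp only [canonM, Finset.mem_image] at h
        obtain ⟨x, hx, hxe⟩ := h
        rw [Sym2.eq_iff] at hxe
        rcases hxe with ⟨h1, h2⟩ | ⟨h1, h2⟩ <;> omega
      · exact absurd (hM'.1.1 h)
          (aux_no_same_side_edge hA' (Or.inr ⟨hpA u hu, hpA v hv⟩))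


/-- A digraph is strongly connected if and only if there is a pair,
unique up to isomorphism, consisting of a bipartite matching covered graph `G` and a
perfect matching `M` of `G` such that `D` is isomorphic to the `M`-direction of `G`. -/
theorem stronglyConnected_iff_mDirection (D : Dgraph) :
    D.StronglyConnected ↔
      ∃ (G : UGraph) (A : Set ℕ) (M : Finset (Sym2 ℕ)),
        G.IsBipartition A ∧ G.MatchingCovered ∧ G.IsPerfectMatching M ∧
        DgraphIso D (mDirection G A M) ∧
        ∀ (G' : UGraph) (A' : Set ℕ) (M' : Finset (Sym2 ℕ)),
          G'.IsBipartition A' → G'.MatchingCovered → G'.IsPerfectMatching M' →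
          DgraphIso D (mDirection G' A' M') → MatchedUGraphIso G M G' M' := by
  constructor
  · intro hD
    exact ⟨canonG D, canonA, canonM D, aux_canonG_bip D, aux_canonG_mc hD, aux_canonM_pm D,
      aux_canon_iso D, fun G' A' M' hA' hmc' hM' hiso => aux_unique G' A' M' hA' hmc' hM' hiso⟩
  · rintro ⟨G, A, M, hA, hmc, hM, hiso, -⟩
    exact aux_strong_of_iso hiso (aux_mDir_strong hA hmc hM)
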